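/- For every positive integer n, every real σ with 0 < σ < 1/2, and every real t ≥ 0, one has (2n/(2n+1))^(1-2σ) · sqrt(((2n+1-σ)² + t²)/((2n+σ)² + t²)) < 1. -/

import Mathlib

open Real Set

lemma key_log (a : ℝ) (ha : 0 < a) (σ : ℝ) (h0 : 0 < σ) (h1 : σ < 1/2) :
    Real.log (a + 1 - σ) - Real.log (a + σ) < (1 - 2*σ) * Real.log ((a+1)/a) := by
  have ha1 : (0:ℝ) < a + 1 := by linarith
  set L : ℝ := Real.log ((a+1)/a) with hLdef
  set F : ℝ → ℝ := fun x => (1 - 2*x) * L + Real.log (a + x) - Real.log (a + 1 - x) with hF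
  have hcont : ContinuousOn F (Icc 0 (1/2)) := by
    apply ContinuousOn.sub
    · apply ContinuousOn.add
      · fun_prop
      · apply ContinuousOn.log (by fun_prop)
        intro x hx
        have := hx.1
        nlinarith [hx.1]
    · apply ContinuousOn.log (by fun_prop)
      intro x hx
      nlinarith [hx.2]
  set G : ℝ → ℝ := fun x => -2 * L + (a + x)⁻¹ + (a + 1 - x)⁻¹ with hG
  have hd1 : ∀ x ∈ Ioo (0:ℝ) (1/2), HasDerivAt F (G x) x := by
    intro x hx
    have hx1 : (0:ℝ) < a + x := by nlinarith [hx.1]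
    have hx2 : (0:ℝ) < a + 1 - x := by nlinarith [hx.2]
    have d1 : HasDerivAt (fun x : ℝ => (1 - 2*x) * L) (-2 * L) x := by
      have : HasDerivAt (fun x : ℝ => (1 - 2*x)) (-2) x := by
        simpa using ((hasDerivAt_id x).const_mul (2:ℝ)).const_sub 1
      simpa using this.mul_const L
    have d2 : HasDerivAt (fun x : ℝ => Real.log (a + x)) ((a + x)⁻¹) x := by
      have h : HasDerivAt (fun x : ℝ => a + x) 1 x := (hasDerivAt_id x).const_add a
      simpa [one_div] using h.log hx1.ne'
    have d3 : HasDerivAt (fun x : ℝ => Real.log (a + 1 - x)) (-(a + 1 - x)⁻¹) x := by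
      have h : HasDerivAt (fun x : ℝ => a + 1 - x) (-1) x := by
        simpa using (hasDerivAt_id x).const_sub (a+1)
      convert h.log hx2.ne' using 1
      ring
    refine ((d1.add d2).sub d3).congr_deriv ?_
    rw [hG]
    ring
  have hderivF : ∀ x ∈ Ioo (0:ℝ) (1/2), deriv F x = G x := fun x hx => (hd1 x hx).deriv
  have hkey : ∀ x ∈ interior (Icc (0:ℝ) (1/2)), deriv^[2] F x < 0 := by
    intro x hx
    rw [interior_Icc] at hx
    have hx1 : (0:ℝ) < a + x := by nlinarith [hx.1]
    have hx2 : (0:ℝ) < a + 1 - x := by nlinarith [hx.2]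
    have heq : deriv F =ᶠ[nhds x] G :=
      Filter.eventuallyEq_of_mem (isOpen_Ioo.mem_nhds hx) hderivF
    have hdG : HasDerivAt G (-((a+x)^2)⁻¹ + ((a+1-x)^2)⁻¹) x := by
      have g1 : HasDerivAt (fun x : ℝ => (a + x)⁻¹) (-((a+x)^2)⁻¹) x := by
        have h : HasDerivAt (fun x : ℝ => a + x) 1 x := (hasDerivAt_id x).const_add a
        refine (h.inv hx1.ne').congr_deriv ?_
        ring
      have g2 : HasDerivAt (fun x : ℝ => (a + 1 - x)⁻¹) (((a+1-x)^2)⁻¹) x := by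
        have h : HasDerivAt (fun x : ℝ => a + 1 - x) (-1) x := by
          simpa using (hasDerivAt_id x).const_sub (a+1)
        refine (h.inv hx2.ne').congr_deriv ?_
        ring
      exact (g1.const_add (-2*L)).add g2
    have : deriv^[2] F x = deriv G x := by
      simp only [Function.iterate_succ, Function.iterate_zero, Function.comp]
      exact heq.deriv_eq
    rw [this, hdG.deriv]
    have hlt : a + x < a + 1 - x := by linarith [hx.2]
    have : ((a+1-x)^2)⁻¹ < ((a+x)^2)⁻¹ := by
      apply inv_strictAnti₀ (by positivity)
      nlinarith
    linarith
  have hsc : StrictConcaveOn ℝ (Icc (0:ℝ) (1/2)) F :=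
    strictConcaveOn_of_deriv2_neg (convex_Icc _ _) hcont hkey
  have h01 : (0:ℝ) ∈ Icc (0:ℝ) (1/2) := by constructor <;> norm_num
  have h02 : (1/2:ℝ) ∈ Icc (0:ℝ) (1/2) := by constructor <;> norm_num
  have hw1 : (0:ℝ) < 1 - 2*σ := by linarith
  have hw2 : (0:ℝ) < 2*σ := by linarith
  have := hsc.2 h01 h02 (by norm_num) hw1 hw2 (by ring)
  simp only [smul_eq_mul] at this
  have hcomb : (1 - 2*σ) * 0 + 2*σ * (1/2) = σ := by ring
  rw [hcomb] at this
  have hF0 : F 0 = 0 := by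
    simp only [hF]
    rw [hLdef, Real.log_div ha1.ne' ha.ne']
    ring_nf
  have hFh : F (1/2) = 0 := by
    simp only [hF]
    norm_num
    ring_nf
  rw [hF0, hFh] at this
  simp only [hF] at this
  linarith

lemma key_ratio (a : ℝ) (ha : 0 < a) (σ : ℝ) (h0 : 0 < σ) (h1 : σ < 1/2) :
    (a/(a+1)) ^ (1 - 2*σ) * ((a + 1 - σ)/(a + σ)) < 1 := by
  have ha1 : (0:ℝ) < a + 1 := by linarith
  have hA : (0:ℝ) < a + 1 - σ := by linarith
  have hB : (0:ℝ) < a + σ := by linarith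
  have hr : (0:ℝ) < (a+1)/a := by positivity
  have hlog := key_log a ha σ h0 h1
  have hexp : (a + 1 - σ)/(a + σ) < ((a+1)/a) ^ (1 - 2*σ) := by
    rw [Real.rpow_def_of_pos hr,
      show Real.log ((a+1)/a) * (1 - 2*σ) = (1 - 2*σ) * Real.log ((a+1)/a) from mul_comm _ _]
    calc (a + 1 - σ)/(a + σ) = Real.exp (Real.log ((a+1-σ)/(a+σ))) := by
          rw [Real.exp_log (by positivity)]
      _ < Real.exp ((1 - 2*σ) * Real.log ((a+1)/a)) := by
          apply Real.exp_lt_exp.mpr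
          rw [Real.log_div hA.ne' hB.ne']
          exact hlog
  have hinv : (a/(a+1)) ^ (1 - 2*σ) = (((a+1)/a) ^ (1 - 2*σ))⁻¹ := by
    rw [← Real.inv_rpow (le_of_lt hr)]
    norm_num
  rw [hinv]
  rw [inv_mul_lt_iff₀ (Real.rpow_pos_of_pos hr _)]
  simpa using hexp

theorem h2n_lt_one (n : ℕ) (hn : 0 < n) (σ t : ℝ) (hσ0 : 0 < σ) (hσ : σ < 1 / 2)
    (ht : 0 ≤ t) :
    ((2 * (n : ℝ)) / (2 * n + 1)) ^ (1 - 2 * σ) *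
        Real.sqrt (((2 * (n : ℝ) + 1 - σ) ^ 2 + t ^ 2) /
          ((2 * (n : ℝ) + σ) ^ 2 + t ^ 2)) < 1 := by
  set a : ℝ := 2 * (n : ℝ) with ha_def
  have ha : (0:ℝ) < a := by
    have : (1:ℝ) ≤ (n:ℝ) := by exact_mod_cast hn
    linarith
  have hA : (0:ℝ) < a + 1 - σ := by linarith
  have hB : (0:ℝ) < a + σ := by linarith
  have hBA : a + σ ≤ a + 1 - σ := by linarith
  have hsqrt : Real.sqrt (((a + 1 - σ) ^ 2 + t ^ 2) / ((a + σ) ^ 2 + t ^ 2))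
      ≤ (a + 1 - σ)/(a + σ) := by
    rw [show (a + 1 - σ)/(a + σ) = Real.sqrt (((a+1-σ)/(a+σ))^2) from
      (Real.sqrt_sq (by positivity)).symm]
    apply Real.sqrt_le_sqrt
    rw [div_pow, div_le_div_iff₀ (by positivity) (by positivity)]
    have hsq : (a + σ)^2 ≤ (a + 1 - σ)^2 := by nlinarith
    nlinarith [mul_le_mul_of_nonneg_left hsq (sq_nonneg t)]
  have hpow : (0:ℝ) < (a/(a+1)) ^ (1 - 2*σ) := Real.rpow_pos_of_pos (by positivity) _
  calc (a/(a+1)) ^ (1 - 2*σ) * Real.sqrt (((a + 1 - σ) ^ 2 + t ^ 2) / ((a + σ) ^ 2 + t ^ 2))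
      ≤ (a/(a+1)) ^ (1 - 2*σ) * ((a + 1 - σ)/(a + σ)) := by
        exact mul_le_mul_of_nonneg_left hsqrt (le_of_lt hpow)
    _ < 1 := key_ratio a ha σ hσ0 (by linarith)
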